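/- arXiv:2108.03595 — 2 statements merged into one kernel-verified Lean document; each statement's English description precedes it below -/
import Mathlib

section
/- Euler's transformation: for |z| < 1 and c with −c ∉ ℕ₀, ₂F₁(a,b;c;z) = (1−z)^{c−a−b} ₂F₁(c−a, c−b; c; z), where (1−z)^{c−a−b} denotes the principal branch. -/
open scoped BigOperators

/-- The rising factorial (Pochhammer symbol) `(a)_n = a(a+1)⋯(a+n-1)`. -/
noncomputable def risingFactorial (a : ℂ) (n : ℕ) : ℂ :=
  ∏ i ∈ Finset.range n, (a + i)

/-- The Gauss hypergeometric series `₂F₁(a,b;c;z) = ∑ (a)_n (b)_n / ((c)_n n!) zⁿ`. -/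
noncomputable def hyp2F1 (a b c z : ℂ) : ℂ :=
  ∑' n : ℕ, risingFactorial a n * risingFactorial b n /
    (risingFactorial c n * (n.factorial : ℂ)) * z ^ n

open Filter Complex

lemma rf_zero (a : ℂ) : risingFactorial a 0 = 1 := by simp [risingFactorial]

lemma rf_succ (a : ℂ) (n : ℕ) :
    risingFactorial a (n + 1) = risingFactorial a n * (a + n) := by
  simp [risingFactorial, Finset.prod_range_succ]

lemma rf_ne_zero {c : ℂ} (hc : ∀ n : ℕ, c ≠ -(n : ℂ)) (n : ℕ) :
    risingFactorial c n ≠ 0 := by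
  rw [risingFactorial, Finset.prod_ne_zero_iff]
  intro i _ h
  exact hc i (by linear_combination h)

lemma tendsto_inv_add (w : ℂ) :
    Tendsto (fun n : ℕ => ((w + n)⁻¹ : ℂ)) atTop (nhds 0) := by
  rw [tendsto_zero_iff_norm_tendsto_zero]
  simp only [norm_inv]
  apply Filter.Tendsto.inv_tendsto_atTop
  apply tendsto_atTop_mono (fun n : ℕ => ?_) (tendsto_atTop_add_const_left _ (-‖w‖) tendsto_natCast_atTop_atTop)
  have h1 := norm_sub_norm_le ((n : ℂ)) (-w)
  have h2 : ‖(n : ℂ) - -w‖ = ‖w + n‖ := by rw [sub_neg_eq_add, add_comm]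
  have h3 : ‖(n : ℂ)‖ = (n : ℝ) := by simp
  rw [h2, h3] at h1
  simp only [norm_neg] at h1
  linarith

lemma tendsto_quot (w w' : ℂ) :
    Tendsto (fun n : ℕ => ((w + n) / (w' + n) : ℂ)) atTop (nhds 1) := by
  have h : ∀ᶠ n : ℕ in atTop, (1 : ℂ) + (w - w') * (w' + n)⁻¹ = (w + n) / (w' + n) := by
    filter_upwards [eventually_gt_atTop ⌈‖w'‖⌉₊] with n hn
    have hne : (w' + n : ℂ) ≠ 0 := by
      intro h0
      have he : ‖w'‖ = (n : ℝ) := by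
        have hw : w' = -(n : ℂ) := by linear_combination h0
        rw [hw]; simp
      have hl := Nat.lt_of_ceil_lt hn
      rw [he] at hl; exact lt_irrefl _ hl
    field_simp
    ring
  apply Tendsto.congr' h
  have : Tendsto (fun n : ℕ => (1 : ℂ) + (w - w') * (w' + n)⁻¹) atTop (nhds (1 + (w - w') * 0)) :=
    tendsto_const_nhds.add (tendsto_const_nhds.mul (tendsto_inv_add w'))
  simpa using this

-- generic ratio test with exact step relation (eventual)
lemma summable_norm_of_step {α : Type*} [NormedDivisionRing α] (f : ℕ → α) (ρ : ℕ → α) (L : ℝ)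
    (hstep : ∀ᶠ n in atTop, f (n + 1) = ρ n * f n)
    (hρ : Tendsto (fun n => ‖ρ n‖) atTop (nhds L)) (hL : L < 1) :
    Summable (fun n => ‖f n‖) := by
  have hL0 : 0 ≤ L := ge_of_tendsto hρ (Filter.Eventually.of_forall (fun n => norm_nonneg _))
  set r : ℝ := (L + 1) / 2 with hr
  have hr1 : r < 1 := by rw [hr]; linarith
  have hLr : L < r := by rw [hr]; linarith
  apply summable_of_ratio_norm_eventually_le hr1
  have hev : ∀ᶠ n in atTop, ‖ρ n‖ < r := hρ.eventually_lt_const hLr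
  filter_upwards [hstep, hev] with n h1 h2
  rw [Real.norm_of_nonneg (norm_nonneg _), Real.norm_of_nonneg (norm_nonneg _), h1, norm_mul]
  exact mul_le_mul_of_nonneg_right (le_of_lt h2) (norm_nonneg _)

-- coefficients
noncomputable def hcoef (a b c : ℂ) (n : ℕ) : ℂ :=
  risingFactorial a n * risingFactorial b n / (risingFactorial c n * (n.factorial : ℂ))

noncomputable def bcoef (s : ℂ) (n : ℕ) : ℂ := risingFactorial s n / (n.factorial : ℂ)

lemma hyp2F1_eq (a b c z : ℂ) : hyp2F1 a b c z = ∑' n : ℕ, hcoef a b c n * z ^ n := rfl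

lemma hcoef_zero (a b c : ℂ) : hcoef a b c 0 = 1 := by simp [hcoef, rf_zero]

lemma bcoef_zero (s : ℂ) : bcoef s 0 = 1 := by simp [bcoef, rf_zero]

lemma hcoef_step {a b c : ℂ} (hc : ∀ n : ℕ, c ≠ -(n : ℂ)) (n : ℕ) :
    ((n : ℂ) + 1) * (c + n) * hcoef a b c (n + 1) = (a + n) * (b + n) * hcoef a b c n := by
  have h1 : risingFactorial c n ≠ 0 := rf_ne_zero hc n
  have h2 : (c + n : ℂ) ≠ 0 := fun h => hc n (by linear_combination h)
  have h3 : ((n.factorial : ℂ)) ≠ 0 := Nat.cast_ne_zero.2 n.factorial_ne_zero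
  have h4 : ((n : ℂ) + 1) ≠ 0 := by
      have hh := Nat.cast_ne_zero (R := ℂ).2 (Nat.succ_ne_zero n)
      push_cast at hh; exact hh
  simp only [hcoef, rf_succ, Nat.factorial_succ, Nat.cast_mul]
  field_simp
  push_cast
  ring

lemma bcoef_step (s : ℂ) (n : ℕ) :
    ((n : ℂ) + 1) * bcoef s (n + 1) = (s + n) * bcoef s n := by
  have h3 : ((n.factorial : ℂ)) ≠ 0 := Nat.cast_ne_zero.2 n.factorial_ne_zero
  have h4 : ((n : ℂ) + 1) ≠ 0 := by
      have hh := Nat.cast_ne_zero (R := ℂ).2 (Nat.succ_ne_zero n)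
      push_cast at hh; exact hh
  simp only [bcoef, rf_succ, Nat.factorial_succ, Nat.cast_mul]
  field_simp
  push_cast
  ring

lemma summable_norm_hyp {a b c z : ℂ} (hz : ‖z‖ < 1) (hc : ∀ n : ℕ, c ≠ -(n : ℂ)) :
    Summable (fun n => ‖hcoef a b c n * z ^ n‖) := by
  apply summable_norm_of_step _ (fun n => (a + n) * (b + n) / ((c + n) * ((n : ℂ) + 1)) * z) ‖z‖ _ _ hz
  · filter_upwards with n
    have h2 : (c + n : ℂ) ≠ 0 := fun h => hc n (by linear_combination h)
    have h4 : ((n : ℂ) + 1) ≠ 0 := by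
      have hh := Nat.cast_ne_zero (R := ℂ).2 (Nat.succ_ne_zero n)
      push_cast at hh; exact hh
    have := hcoef_step (a := a) (b := b) hc n
    have hne : ((n : ℂ) + 1) * (c + n) ≠ 0 := mul_ne_zero h4 h2
    field_simp
    rw [pow_succ]
    linear_combination z * z ^ n * this
  · have h1 : Tendsto (fun n : ℕ => ‖((a + n) / (c + n) : ℂ)‖) atTop (nhds 1) := by
      simpa using (tendsto_quot a c).norm
    have h2 : Tendsto (fun n : ℕ => ‖((b + n) / (1 + n) : ℂ)‖) atTop (nhds 1) := by
      simpa using (tendsto_quot b 1).norm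
    have h3 : Tendsto (fun n : ℕ => ‖((a + n) / (c + n) : ℂ)‖ * ‖((b + n) / (1 + n) : ℂ)‖ * ‖z‖)
        atTop (nhds (1 * 1 * ‖z‖)) := (h1.mul h2).mul_const _
    simp only [one_mul] at h3
    apply h3.congr
    intro n
    rw [← norm_mul, ← norm_mul]
    rw [← mul_div_mul_comm, add_comm (1 : ℂ) (n : ℂ)]

lemma summable_norm_bcoef {s z : ℂ} (hz : ‖z‖ < 1) :
    Summable (fun n => ‖bcoef s n * z ^ n‖) := by
  apply summable_norm_of_step _ (fun n => (s + n) / ((n : ℂ) + 1) * z) ‖z‖ _ _ hz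
  · filter_upwards with n
    have h4 : ((n : ℂ) + 1) ≠ 0 := by
      have hh := Nat.cast_ne_zero (R := ℂ).2 (Nat.succ_ne_zero n)
      push_cast at hh; exact hh
    have := bcoef_step s n
    field_simp
    rw [pow_succ]
    linear_combination z * z ^ n * this
  · have h1 : Tendsto (fun n : ℕ => ‖((s + n) / (1 + n) : ℂ)‖ * ‖z‖) atTop (nhds (1 * ‖z‖)) := by
      have hq : Tendsto (fun n : ℕ => ‖((s + n) / (1 + n) : ℂ)‖) atTop (nhds 1) := by
        simpa using (tendsto_quot s 1).norm
      exact hq.mul_const _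
    simp only [one_mul] at h1
    apply h1.congr
    intro n
    rw [← norm_mul, add_comm (1 : ℂ) (n : ℂ)]

lemma summable_norm_deriv_bcoef (s : ℂ) {r : ℝ} (hr0 : 0 ≤ r) (hr : r < 1) :
    Summable (fun n : ℕ => ‖(n : ℂ) * bcoef s n * (r : ℂ) ^ (n - 1)‖) := by
  apply summable_norm_of_step _ (fun n => ((s + n) / (0 + n)) * r) r _ _ hr
  · filter_upwards [eventually_ge_atTop 1] with n hn
    obtain ⟨m, rfl⟩ : ∃ m, n = m + 1 := ⟨n - 1, by omega⟩
    have hb := bcoef_step s (m + 1)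
    have hne : ((m : ℂ) + 1) ≠ 0 := by
      have hh := Nat.cast_ne_zero (R := ℂ).2 (Nat.succ_ne_zero m)
      push_cast at hh; exact hh
    simp only [Nat.add_sub_cancel]
    push_cast at hb ⊢
    field_simp
    ring_nf
    ring_nf at hb
    linear_combination ((r : ℂ) ^ (m + 1) * ((m : ℂ) + 1)) * hb
  · have hq : Tendsto (fun n : ℕ => ‖((s + n) / (0 + n) : ℂ)‖) atTop (nhds 1) := by
      simpa using (tendsto_quot s 0).norm
    have h1 := hq.mul_const r
    simp only [one_mul] at h1
    apply h1.congr
    intro n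
    rw [norm_mul, Complex.norm_real, Real.norm_of_nonneg hr0]

noncomputable def Efun (s : ℂ) : ℂ → ℂ := fun w => ∑' n, bcoef s n * w ^ n

lemma summable_d {s w : ℂ} (hw : ‖w‖ < 1) :
    Summable (fun n : ℕ => ‖(n : ℂ) * bcoef s n * w ^ (n - 1)‖) := by
  apply (summable_norm_deriv_bcoef s (norm_nonneg w) hw).congr
  intro n
  simp [norm_mul, norm_pow, Complex.norm_real, abs_norm]

lemma hasDerivAt_Efun (s : ℂ) {w : ℂ} (hw : ‖w‖ < 1) :
    HasDerivAt (Efun s) (∑' n : ℕ, (n : ℂ) * bcoef s n * w ^ (n - 1)) w := by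
  set r : ℝ := (‖w‖ + 1) / 2 with hrdef
  have hr0 : 0 < r := by positivity
  have hwr : ‖w‖ < r := by rw [hrdef]; linarith
  have hr1 : r < 1 := by rw [hrdef]; linarith
  refine hasDerivAt_tsum_of_isPreconnected
    (summable_norm_deriv_bcoef s hr0.le hr1) Metric.isOpen_ball
    (convex_ball (0 : ℂ) r).isPreconnected
    (g := fun n z => bcoef s n * z ^ n)
    (g' := fun n y => (n : ℂ) * bcoef s n * y ^ (n - 1))
    ?_ ?_ (Metric.mem_ball_self hr0) ?_ (mem_ball_zero_iff.2 hwr)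
  · intro n y _
    have h := (hasDerivAt_pow n y).const_mul (bcoef s n)
    exact h.congr_deriv (by ring)
  · intro n y hy
    rw [mem_ball_zero_iff] at hy
    simp only [norm_mul, norm_pow, Complex.norm_real, Real.norm_of_nonneg hr0.le]
    gcongr
    all_goals exact hy.le
  · apply Summable.of_norm
    exact summable_norm_bcoef (by simpa using zero_lt_one)

lemma ode_Efun (s : ℂ) {w : ℂ} (hw : ‖w‖ < 1) :
    (1 - w) * (∑' n : ℕ, (n : ℂ) * bcoef s n * w ^ (n - 1)) = s * Efun s w := by
  have hd : Summable (fun n : ℕ => (n : ℂ) * bcoef s n * w ^ (n - 1)) :=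
    (summable_d (s := s) hw).of_norm
  have hd1 : Summable (fun n : ℕ => ((n : ℂ) + 1) * bcoef s (n + 1) * w ^ n) := by
    have h := (summable_nat_add_iff 1).2 hd
    apply h.congr
    intro n
    push_cast
    simp [Nat.add_sub_cancel]
  have hs2 : Summable (fun n : ℕ => (n : ℂ) * bcoef s n * w ^ n) := by
    apply (hd.mul_left w).congr
    intro n
    cases n with
    | zero => simp
    | succ m => simp only [Nat.add_sub_cancel]; push_cast; ring
  have h1 : (∑' n : ℕ, (n : ℂ) * bcoef s n * w ^ (n - 1))
      = ∑' n : ℕ, ((n : ℂ) + 1) * bcoef s (n + 1) * w ^ n := by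
    rw [hd.tsum_eq_zero_add]
    simp only [Nat.cast_zero, zero_mul, zero_add, Nat.add_sub_cancel]
    congr 1
    funext n
    push_cast
    ring
  have h2 : w * (∑' n : ℕ, (n : ℂ) * bcoef s n * w ^ (n - 1))
      = ∑' n : ℕ, (n : ℂ) * bcoef s n * w ^ n := by
    rw [← tsum_mul_left]
    apply tsum_congr
    intro n
    cases n with
    | zero => simp
    | succ m => simp only [Nat.add_sub_cancel]; push_cast; ring
  have key : (1 - w) * (∑' n : ℕ, (n : ℂ) * bcoef s n * w ^ (n - 1))
      = ∑' n : ℕ, (((n : ℂ) + 1) * bcoef s (n + 1) - (n : ℂ) * bcoef s n) * w ^ n := by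
    rw [sub_mul, one_mul, h2]
    rw [h1]
    rw [← hd1.tsum_sub hs2]
    apply tsum_congr
    intro n
    ring
  rw [key]
  have : ∀ n : ℕ, (((n : ℂ) + 1) * bcoef s (n + 1) - (n : ℂ) * bcoef s n) * w ^ n
      = s * (bcoef s n * w ^ n) := by
    intro n
    have hb := bcoef_step s n
    linear_combination w ^ n * hb
  rw [tsum_congr this, tsum_mul_left]
  rfl

lemma Efun_zero (s : ℂ) : Efun s 0 = 1 := by
  rw [Efun]
  rw [tsum_eq_single 0 (fun n hn => by simp [zero_pow hn])]
  simp [bcoef_zero]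

theorem Efun_eq (s z : ℂ) (hz : ‖z‖ < 1) : Efun s z = (1 - z) ^ (-s) := by
  have hone : ∀ w : ℂ, ‖w‖ < 1 → (1 - w) ≠ 0 := by
    intro w hw h
    have : w = 1 := by linear_combination -h
    rw [this] at hw; simp at hw
  have hball : ∀ w ∈ Metric.ball (0 : ℂ) 1,
      HasDerivAt (fun y => Efun s y * (1 - y) ^ s) 0 w := by
    intro w hw
    rw [mem_ball_zero_iff] at hw
    have h1w : (1 - w) ≠ 0 := hone w hw
    have hslit : (1 - w) ∈ Complex.slitPlane := by
      left
      have : w.re ≤ ‖w‖ := Complex.re_le_norm w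
      simp only [Complex.sub_re, Complex.one_re]
      linarith
    have hd := hasDerivAt_Efun s hw
    have hcp : HasDerivAt (fun y : ℂ => (1 - y) ^ s) (s * (1 - w) ^ (s - 1) * (-1)) w :=
      HasDerivAt.cpow_const ((hasDerivAt_id w).const_sub 1) hslit
    have hmul := hd.mul hcp
    have hode := ode_Efun s hw
    have hpow : (1 - w) ^ s = (1 - w) ^ (s - 1) * (1 - w) := by
      conv_lhs => rw [show s = (s - 1) + 1 by ring]
      rw [Complex.cpow_add _ _ h1w, Complex.cpow_one]
    refine hmul.congr_deriv ?_
    linear_combination ((1 - w) ^ (s - 1)) * hode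
      + (∑' n : ℕ, (n : ℂ) * bcoef s n * w ^ (n - 1)) * hpow
  have hdiff : DifferentiableOn ℂ (fun y => Efun s y * (1 - y) ^ s) (Metric.ball (0 : ℂ) 1) :=
    fun w hw => ((hball w hw).differentiableAt).differentiableWithinAt
  have hconst : Efun s z * (1 - z) ^ s = Efun s 0 * (1 - 0) ^ s := by
    apply Convex.is_const_of_fderivWithin_eq_zero (convex_ball (0 : ℂ) 1) hdiff
    · intro w hw
      have h0 : HasFDerivAt (fun y => Efun s y * (1 - y) ^ s)
          ((1 : ℂ →L[ℂ] ℂ).smulRight (0 : ℂ)) w := (hball w hw).hasFDerivAt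
      have := (h0.hasFDerivWithinAt).fderivWithin (Metric.isOpen_ball.uniqueDiffWithinAt hw)
      rw [this]
      ext x
      simp
    · exact mem_ball_zero_iff.2 hz
    · exact Metric.mem_ball_self one_pos
  rw [Efun_zero] at hconst
  simp only [sub_zero, Complex.one_cpow, one_mul, mul_one] at hconst
  have hpne : (1 - z) ^ s ≠ 0 := by
    rw [Ne, Complex.cpow_eq_zero_iff]
    push_neg
    intro h
    exact absurd h (hone z hz)
  rw [Complex.cpow_neg]
  field_simp
  exact hconst

section Algebra

variable {a b c : ℂ}

-- Cauchy-product coefficient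
noncomputable def Pcoef (a b c : ℂ) (n : ℕ) : ℂ :=
  ∑ k ∈ Finset.range (n + 1), bcoef (a + b - c) k * hcoef (c - a) (c - b) c (n - k)

lemma key_step (hc : ∀ n : ℕ, c ≠ -(n : ℂ)) (n : ℕ) :
    ((n : ℂ) + 1) * (c + n) * Pcoef a b c (n + 1) = (a + n) * (b + n) * Pcoef a b c n := by
  classical
  set e : ℕ → ℂ := bcoef (a + b - c) with he
  set B : ℕ → ℂ := hcoef (c - a) (c - b) c with hB
  set G : ℕ → ℂ := fun k => (k : ℂ) * ((k : ℂ) - c - 2 * n - 1) * e k * B (n + 1 - k) with hG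
  have hpoint : ∀ k ∈ Finset.range (n + 1),
      ((n : ℂ) + 1) * (c + n) * (e k * B (n + 1 - k)) - (a + n) * (b + n) * (e k * B (n - k))
        = G (k + 1) - G k := by
    intro k hk
    rw [Finset.mem_range] at hk
    have hkn : k ≤ n := by omega
    obtain ⟨m, rfl⟩ : ∃ m, n = m + k := ⟨n - k, by omega⟩
    have h1 : m + k + 1 - k = m + 1 := by omega
    have h2 : m + k - k = m := by omega
    have h3 : m + k + 1 - (k + 1) = m := by omega
    have hGk : G k = (k : ℂ) * ((k : ℂ) - c - 2 * ((m : ℂ) + k) - 1) * e k * B (m + 1) := by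
      simp only [hG]
      rw [h1]
      push_cast
      ring
    have hGk1 : G (k + 1) = ((k : ℂ) + 1) * (((k : ℂ) + 1) - c - 2 * ((m : ℂ) + k) - 1)
        * e (k + 1) * B m := by
      simp only [hG]
      rw [h3]
      push_cast
      ring
    rw [hGk, hGk1, h1, h2]
    have hestep := bcoef_step (a + b - c) k
    have hBstep := hcoef_step (a := c - a) (b := c - b) hc m
    have hek : ((k : ℂ) + 1) ≠ 0 := by
      have hh := Nat.cast_ne_zero (R := ℂ).2 (Nat.succ_ne_zero k)
      push_cast at hh; exact hh
    have hem : ((m : ℂ) + 1) ≠ 0 := by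
      have hh := Nat.cast_ne_zero (R := ℂ).2 (Nat.succ_ne_zero m)
      push_cast at hh; exact hh
    have hcm : (c + m : ℂ) ≠ 0 := fun h => hc m (by linear_combination h)
    have heB : e (k + 1) = (a + b - c + k) * e k / ((k : ℂ) + 1) := by
      rw [eq_div_iff hek]; linear_combination hestep
    have hBB : B (m + 1) = (c - a + m) * (c - b + m) * B m / (((m : ℂ) + 1) * (c + m)) := by
      rw [eq_div_iff (mul_ne_zero hem hcm)]; linear_combination hBstep
    rw [heB, hBB]
    push_cast
    field_simp
    ring
  have hsum := Finset.sum_congr rfl hpoint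
  rw [Finset.sum_sub_distrib, Finset.sum_range_sub (f := G)] at hsum
  have hG0 : G 0 = 0 := by simp [hG]
  have hGn : G (n + 1) = -(((n : ℂ) + 1) * (c + n)) * (e (n + 1) * B 0) := by
    have h4 : n + 1 - (n + 1) = 0 := by omega
    simp only [hG, h4]
    push_cast
    ring
  rw [hG0, hGn, sub_zero] at hsum
  have hP1 : Pcoef a b c (n + 1)
      = (∑ k ∈ Finset.range (n + 1), e k * B (n + 1 - k)) + e (n + 1) * B 0 := by
    rw [Pcoef, Finset.sum_range_succ]
    simp [he, hB]
  have hP0 : Pcoef a b c n = ∑ k ∈ Finset.range (n + 1), e k * B (n - k) := rfl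
  rw [hP1, hP0]
  rw [← Finset.mul_sum, ← Finset.mul_sum] at hsum
  linear_combination hsum

end Algebra

lemma Pcoef_eq (a b c : ℂ) (hc : ∀ n : ℕ, c ≠ -(n : ℂ)) (n : ℕ) :
    Pcoef a b c n = hcoef a b c n := by
  induction n with
  | zero => simp [Pcoef, bcoef_zero, hcoef_zero]
  | succ n ih =>
    have h1 := key_step (a := a) (b := b) hc n
    have h2 := hcoef_step (a := a) (b := b) hc n
    rw [ih] at h1
    have hek : ((n : ℂ) + 1) ≠ 0 := by
      have hh := Nat.cast_ne_zero (R := ℂ).2 (Nat.succ_ne_zero n)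
      push_cast at hh; exact hh
    have hcn : (c + n : ℂ) ≠ 0 := fun h => hc n (by linear_combination h)
    have hne : ((n : ℂ) + 1) * (c + n) ≠ 0 := mul_ne_zero hek hcn
    apply mul_left_cancel₀ hne
    rw [h1, h2]

theorem stmt_10 (a b c z : ℂ) (hz : ‖z‖ < 1) (hc : ∀ n : ℕ, c ≠ -(n : ℂ)) :
    hyp2F1 a b c z = (1 - z) ^ (c - a - b) * hyp2F1 (c - a) (c - b) c z := by
  have hbnorm : Summable (fun n => ‖bcoef (a + b - c) n * z ^ n‖) := summable_norm_bcoef hz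
  have hhnorm : Summable (fun n => ‖hcoef (c - a) (c - b) c n * z ^ n‖) :=
    summable_norm_hyp hz hc
  have hE : (1 - z) ^ (c - a - b) = ∑' n : ℕ, bcoef (a + b - c) n * z ^ n := by
    have := Efun_eq (a + b - c) z hz
    rw [Efun] at this
    rw [this]
    congr 1
    ring
  rw [hE, hyp2F1_eq, hyp2F1_eq,
    tsum_mul_tsum_eq_tsum_sum_range_of_summable_norm hbnorm hhnorm]
  apply tsum_congr
  intro n
  rw [← Pcoef_eq a b c hc n, Pcoef, Finset.sum_mul]
  apply Finset.sum_congr rfl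
  intro k hk
  rw [Finset.mem_range] at hk
  have hkn : k ≤ n := by omega
  have : z ^ k * z ^ (n - k) = z ^ n := by
    rw [← pow_add]
    congr 1
    omega
  calc bcoef (a + b - c) k * hcoef (c - a) (c - b) c (n - k) * z ^ n
      = bcoef (a + b - c) k * z ^ k * (hcoef (c - a) (c - b) c (n - k) * z ^ (n - k)) := by
        rw [← this]; ring
    _ = _ := rfl
end

section
/- Higher-derivative quotient formula: let F, G be functions analytic at a point z with G(z) ≠ 0, and let R = F/G. Then for every n ∈ ℕ₀, R^{(n)}(z) = ∑_{k=0}^{n} (−1)^k (n+1 choose k+1) (F·G^k)^{(n)}(z) / G(z)^{k+1}. -/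
open Finset Topology

private lemma analyticAt_deriv {f : ℂ → ℂ} {z : ℂ} (hf : AnalyticAt ℂ f z) :
    AnalyticAt ℂ (deriv f) z := by
  obtain ⟨s, hsm, h⟩ := hf.eventually_analyticAt.exists_mem
  exact (AnalyticOnNhd.deriv (fun w hw => h w hw)) z (mem_of_mem_nhds hsm)

private lemma idw_eq_id (n : ℕ) {f : ℂ → ℂ} {s : Set ℂ} {x : ℂ} (hs : IsOpen s) (hx : x ∈ s) :
    iteratedDerivWithin n f s x = iteratedDeriv n f x := by
  rw [iteratedDerivWithin_eq_iteratedFDerivWithin, iteratedDeriv_eq_iteratedFDeriv,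
    iteratedFDerivWithin_of_isOpen n hs hx]

private lemma iter_add {f g : ℂ → ℂ} {z : ℂ} (hf : AnalyticAt ℂ f z) (hg : AnalyticAt ℂ g z)
    (n : ℕ) : iteratedDeriv n (fun w => f w + g w) z
      = iteratedDeriv n f z + iteratedDeriv n g z := by
  obtain ⟨s, hsm, h⟩ := (hf.eventually_analyticAt.and hg.eventually_analyticAt).exists_mem
  obtain ⟨t, hts, hto, hzt⟩ := mem_nhds_iff.mp hsm
  have hf' : ContDiffOn ℂ n f t := fun w hw => ((h w (hts hw)).1.contDiffAt).contDiffWithinAt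
  have hg' : ContDiffOn ℂ n g t := fun w hw => ((h w (hts hw)).2.contDiffAt).contDiffWithinAt
  rw [← idw_eq_id n hto hzt, ← idw_eq_id n hto hzt, ← idw_eq_id n hto hzt]
  exact iteratedDerivWithin_add hzt hto.uniqueDiffOn (hf' z hzt) (hg' z hzt)

private lemma iter_cmul {f : ℂ → ℂ} {z : ℂ} (hf : AnalyticAt ℂ f z) (c : ℂ) (n : ℕ) :
    iteratedDeriv n (fun w => c * f w) z = c * iteratedDeriv n f z := by
  obtain ⟨s, hsm, h⟩ := hf.eventually_analyticAt.exists_mem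
  obtain ⟨t, hts, hto, hzt⟩ := mem_nhds_iff.mp hsm
  have hf' : ContDiffOn ℂ n f t := fun w hw => ((h w (hts hw)).contDiffAt).contDiffWithinAt
  rw [← idw_eq_id n hto hzt, ← idw_eq_id n hto hzt]
  exact iteratedDerivWithin_const_mul hzt hto.uniqueDiffOn c (hf' z hzt)

private lemma iter_sum {ι : Type*} (t : Finset ι) (f : ι → ℂ → ℂ) {z : ℂ}
    (hf : ∀ i ∈ t, AnalyticAt ℂ (f i) z) (n : ℕ) :
    iteratedDeriv n (fun w => ∑ i ∈ t, f i w) z = ∑ i ∈ t, iteratedDeriv n (f i) z := by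
  classical
  induction t using Finset.induction_on with
  | empty =>
      simp only [Finset.sum_empty]
      rw [show iteratedDeriv n (fun _ : ℂ => (0:ℂ)) z = iteratedDeriv n (fun _ : ℂ => (0:ℂ)) z
        from rfl]
      simpa using iteratedDeriv_const_smul (n := n) (f := fun _ : ℂ => (0:ℂ)) (c := 1) (by
        exact contDiff_const) ▸ (by simp [iteratedDeriv_eq_iteratedFDeriv])
  | @insert a s hni ih =>
      simp only [Finset.sum_insert hni]
      rw [iter_add (hf a (Finset.mem_insert_self a s))
        (Finset.analyticAt_fun_sum s (fun i hi => hf i (Finset.mem_insert_of_mem hi)))]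
      rw [ih (fun i hi => hf i (Finset.mem_insert_of_mem hi))]

private lemma iter_vanish {v : ℂ → ℂ} {z : ℂ} (hv : AnalyticAt ℂ v z) (hvz : v z = 0) :
    ∀ (i : ℕ) (q : ℂ → ℂ), AnalyticAt ℂ q z → ∀ m : ℕ, i < m →
      iteratedDeriv i (fun w => v w ^ m * q w) z = 0 := by
  intro i
  induction i with
  | zero =>
      intro q hq m hm
      simp [iteratedDeriv_zero, hvz, zero_pow (by omega : m ≠ 0)]
  | succ i ih =>
      intro q hq m hm
      obtain ⟨m', rfl⟩ : ∃ m', m = m' + 1 := ⟨m - 1, by omega⟩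
      rw [iteratedDeriv_succ']
      have hev : deriv (fun w => v w ^ (m' + 1) * q w) =ᶠ[𝓝 z]
          (fun w => v w ^ m' * (((m' : ℂ) + 1) * deriv v w * q w + v w * deriv q w)) := by
        filter_upwards [hv.eventually_analyticAt, hq.eventually_analyticAt] with w hvw hqw
        rw [deriv_fun_mul (show DifferentiableAt ℂ (fun y => v y ^ (m' + 1)) w from hvw.differentiableAt.pow _) hqw.differentiableAt,
          (show deriv (fun y => v y ^ (m' + 1)) w = _ from deriv_pow hvw.differentiableAt _)]
        simp only [Nat.add_sub_cancel]
        push_cast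
        ring
      rw [Filter.EventuallyEq.iteratedDeriv_eq i hev]
      exact ih _ (((analyticAt_const.mul (analyticAt_deriv hv)).mul hq).add
        (hv.mul (analyticAt_deriv hq))) m' (by omega)

private lemma key_alg (a b c : ℂ) (ha : a ≠ 0) (hb : b ≠ 0) (n : ℕ) :
    c / b = (∑ k ∈ Finset.range (n + 1), a⁻¹ ^ (k + 1) * (c * (a - b) ^ k))
      + (a - b) ^ (n + 1) * (c / (b * a ^ (n + 1))) := by
  induction n with
  | zero => rw [Finset.sum_range_one, inv_pow]; field_simp; ring
  | succ n ih =>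
      have h2 : a⁻¹ ^ (n + 1 + 1) * (c * (a - b) ^ (n + 1))
          + (a - b) ^ (n + 1 + 1) * (c / (b * a ^ (n + 1 + 1)))
          = (a - b) ^ (n + 1) * (c / (b * a ^ (n + 1))) := by
        rw [inv_pow]
        field_simp
        ring
      rw [Finset.sum_range_succ, add_assoc, h2]
      exact ih

theorem stmt_17 (F G : ℂ → ℂ) (z : ℂ)
    (hF : AnalyticAt ℂ F z) (hG : AnalyticAt ℂ G z) (hGz : G z ≠ 0) (n : ℕ) :
    iteratedDeriv n (fun w => F w / G w) z =
      ∑ k ∈ Finset.range (n + 1), (-1 : ℂ) ^ k * ((n + 1).choose (k + 1) : ℂ) *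
        iteratedDeriv n (fun w => F w * (G w) ^ k) z / (G z) ^ (k + 1) := by
  have hGG : AnalyticAt ℂ (fun w => G z - G w) z := analyticAt_const.sub hG
  set D : ℕ → ℂ := fun j => iteratedDeriv n (fun w => F w * G w ^ j) z with hD
  have hev : (fun w => F w / G w) =ᶠ[𝓝 z]
      (fun w => (∑ k ∈ Finset.range (n + 1), (G z)⁻¹ ^ (k + 1) * (F w * (G z - G w) ^ k))
        + (G z - G w) ^ (n + 1) * (F w / (G w * (G z) ^ (n + 1)))) := by
    filter_upwards [hG.continuousAt.eventually_ne hGz] with w hw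
    exact key_alg (G z) (G w) (F w) hGz hw n
  rw [Filter.EventuallyEq.iteratedDeriv_eq n hev]
  have hA1 : ∀ k : ℕ, AnalyticAt ℂ
      (fun w => (G z)⁻¹ ^ (k + 1) * (F w * (G z - G w) ^ k)) z :=
    fun k => analyticAt_const.mul (hF.mul (hGG.pow k))
  have hS : AnalyticAt ℂ
      (fun w => ∑ k ∈ Finset.range (n + 1), (G z)⁻¹ ^ (k + 1) * (F w * (G z - G w) ^ k)) z :=
    Finset.analyticAt_fun_sum _ (fun k _ => hA1 k)
  have hq : AnalyticAt ℂ (fun w => F w / (G w * (G z) ^ (n + 1))) z :=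
    hF.div (hG.mul analyticAt_const) (by simp [hGz, pow_ne_zero])
  have hR : AnalyticAt ℂ
      (fun w => (G z - G w) ^ (n + 1) * (F w / (G w * (G z) ^ (n + 1)))) z :=
    (hGG.pow _).mul hq
  have hvan : iteratedDeriv n
      (fun w => (G z - G w) ^ (n + 1) * (F w / (G w * (G z) ^ (n + 1)))) z = 0 :=
    iter_vanish hGG (by simp) n (fun w => F w / (G w * (G z) ^ (n + 1))) hq (n + 1)
      (Nat.lt_succ_self n)
  rw [iter_add hS hR n, hvan, add_zero]
  rw [iter_sum (Finset.range (n + 1)) (fun k w => (G z)⁻¹ ^ (k + 1) * (F w * (G z - G w) ^ k)) (fun k _ => hA1 k) n]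
  have hk : ∀ k : ℕ, iteratedDeriv n (fun w => (G z)⁻¹ ^ (k + 1) * (F w * (G z - G w) ^ k)) z
      = (G z)⁻¹ ^ (k + 1) * iteratedDeriv n (fun w => F w * (G z - G w) ^ k) z :=
    fun k => iter_cmul (hF.mul (hGG.pow k)) _ n
  have hexp : ∀ k : ℕ, iteratedDeriv n (fun w => F w * (G z - G w) ^ k) z
      = ∑ j ∈ Finset.range (k + 1), ((-1 : ℂ) ^ j * (G z) ^ (k - j) * (k.choose j)) * D j := by
    intro k
    have e1 : (fun w => F w * (G z - G w) ^ k)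
        = fun w => ∑ m ∈ Finset.range (k + 1),
            ((-1 : ℂ) ^ (m + k) * (G z) ^ m * (k.choose m)) * (F w * G w ^ (k - m)) := by
      funext w
      rw [sub_pow, Finset.mul_sum]
      exact Finset.sum_congr rfl (fun m _ => by ring)
    rw [e1, iter_sum (Finset.range (k + 1)) (fun m w => ((-1 : ℂ) ^ (m + k) * (G z) ^ m * (k.choose m)) * (F w * G w ^ (k - m))) (fun m _ => analyticAt_const.mul (hF.mul (hG.pow _))) n]
    have e2 : ∀ m ∈ Finset.range (k + 1),
        iteratedDeriv n (fun w => ((-1 : ℂ) ^ (m + k) * (G z) ^ m * (k.choose m))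
          * (F w * G w ^ (k - m))) z
        = ((-1 : ℂ) ^ (m + k) * (G z) ^ m * (k.choose m)) * D (k - m) :=
      fun m _ => iter_cmul (hF.mul (hG.pow _)) _ n
    rw [Finset.sum_congr rfl e2]
    rw [← Finset.sum_range_reflect]
    refine Finset.sum_congr rfl (fun j hj => ?_)
    rw [Finset.mem_range] at hj
    have h1 : k + 1 - 1 - j = k - j := by omega
    have h2 : k - (k - j) = j := by omega
    have h3 : (k - j) + k = j + 2 * (k - j) := by omega
    have h4 : k.choose (k - j) = k.choose j := Nat.choose_symm (by omega)
    rw [h1, h2, h3, h4, pow_add, pow_mul]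
    norm_num
  calc
    ∑ k ∈ Finset.range (n + 1),
        iteratedDeriv n (fun w => (G z)⁻¹ ^ (k + 1) * (F w * (G z - G w) ^ k)) z
      = ∑ k ∈ Finset.range (n + 1), ∑ j ∈ Finset.range (k + 1),
          ((k.choose j : ℂ)) * ((-1 : ℂ) ^ j * (G z)⁻¹ ^ (j + 1) * D j) := by
        refine Finset.sum_congr rfl (fun k _ => ?_)
        rw [hk k, hexp k, Finset.mul_sum]
        refine Finset.sum_congr rfl (fun j hj => ?_)
        rw [Finset.mem_range] at hj
        have hpow : (G z)⁻¹ ^ (k + 1) * (G z) ^ (k - j) = (G z)⁻¹ ^ (j + 1) := by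
          have h1 : k + 1 = (k - j) + (j + 1) := by omega
          rw [h1, pow_add, mul_right_comm, inv_pow,
            inv_mul_cancel₀ (pow_ne_zero _ hGz), one_mul]
        calc (G z)⁻¹ ^ (k + 1) * (((-1 : ℂ) ^ j * (G z) ^ (k - j) * (k.choose j)) * D j)
            = ((G z)⁻¹ ^ (k + 1) * (G z) ^ (k - j)) * ((-1 : ℂ) ^ j * (k.choose j) * D j) := by
              ring
          _ = ((k.choose j : ℂ)) * ((-1 : ℂ) ^ j * (G z)⁻¹ ^ (j + 1) * D j) := by
              rw [hpow]; ring
    _ = ∑ j ∈ Finset.range (n + 1), ∑ k ∈ Finset.Icc j n,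
          ((k.choose j : ℂ)) * ((-1 : ℂ) ^ j * (G z)⁻¹ ^ (j + 1) * D j) := by
        refine Finset.sum_comm' (fun k j => ?_)
        simp only [Finset.mem_range, Finset.mem_Icc]
        omega
    _ = ∑ j ∈ Finset.range (n + 1),
          (((n + 1).choose (j + 1) : ℂ)) * ((-1 : ℂ) ^ j * (G z)⁻¹ ^ (j + 1) * D j) := by
        refine Finset.sum_congr rfl (fun j _ => ?_)
        rw [← Finset.sum_mul, ← Nat.cast_sum, Nat.sum_Icc_choose]
    _ = ∑ k ∈ Finset.range (n + 1), (-1 : ℂ) ^ k * ((n + 1).choose (k + 1) : ℂ) *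
          D k / (G z) ^ (k + 1) := by
        refine Finset.sum_congr rfl (fun k _ => ?_)
        rw [div_eq_mul_inv, ← inv_pow]
        ring
end
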